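/- Let (Ω,𝓕,P) be a probability space, (Ω₁,𝓕₁,μ₁) and (Ω₂,𝓕₂,μ₂) σ-finite measure spaces, and X : Ω → Ω₁, Y : Ω → Ω₂ measurable maps. Suppose f : Ω₁ × Ω₂ → [0,∞] is measurable with ∫⁻_C f d(μ₁ ×ₘ μ₂) = P((ω : (X(ω), Y(ω)) ∈ C)) for every measurable C ⊆ Ω₁ × Ω₂. Define, for ω₁ ∈ Ω₁ and measurable A₂ ⊆ Ω₂, K(ω₁, A₂) := (∫⁻_{A₂} f(ω₁, ω₂) dμ₂) / (∫⁻_{Ω₂} f(ω₁, ω₂) dμ₂) when 0 < ∫⁻_{Ω₂} f(ω₁, ω₂) dμ₂ < ∞, and K(ω₁, A₂) := 0 otherwise. Then for each ω₁, K(ω₁, ·) is a measure on Ω₂, for each measurable A₂ the function K(·, A₂) is 𝓕₁-measurable, and ∫⁻_{A₁} K(ω₁, A₂) d((P.map X)(ω₁)) = P(X⁻¹(A₁) ∩ Y⁻¹(A₂)) for all measurable A₁ ⊆ Ω₁ and A₂ ⊆ Ω₂; that is, K is a kernel version of the conditional probability P[Y|X]. (Paper's Theorem 4.6.) -/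

import Mathlib

open MeasureTheory
open scoped Classical ENNReal

/-- The candidate conditional kernel built from a joint density `f`: for each `ω₁`
it is the measure `A₂ ↦ (∫⁻_{A₂} f(ω₁,·) dμ₂) / (∫⁻ f(ω₁,·) dμ₂)` when the
denominator is positive and finite, and the zero measure otherwise. -/
noncomputable def condProbOfDensity {Ω₁ Ω₂ : Type*} [MeasurableSpace Ω₁]
    [MeasurableSpace Ω₂] (μ₂ : Measure Ω₂) (f : Ω₁ × Ω₂ → ℝ≥0∞) : Ω₁ → Measure Ω₂ :=
  fun ω₁ =>
    if 0 < ∫⁻ ω₂, f (ω₁, ω₂) ∂μ₂ ∧ ∫⁻ ω₂, f (ω₁, ω₂) ∂μ₂ < ⊤ then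
      (∫⁻ ω₂, f (ω₁, ω₂) ∂μ₂)⁻¹ • μ₂.withDensity (fun ω₂ => f (ω₁, ω₂))
    else 0

/-- Paper's Theorem 4.6: if `f` is a density of the joint law of `(X, Y)` with respect
to `μ₁ × μ₂`, then the normalized family `condProbOfDensity μ₂ f` is measurable in
`ω₁` and is a kernel version of the conditional probability `P[Y | X]`:
`∫⁻_{A₁} K(ω₁)(A₂) d(P.map X) = P(X⁻¹ A₁ ∩ Y⁻¹ A₂)` for all measurable `A₁, A₂`. -/
theorem condProbOfDensity_is_conditional_probability
    {Ω Ω₁ Ω₂ : Type*} [MeasurableSpace Ω] [MeasurableSpace Ω₁] [MeasurableSpace Ω₂]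
    (P : Measure Ω) [IsProbabilityMeasure P]
    (μ₁ : Measure Ω₁) (μ₂ : Measure Ω₂) [SigmaFinite μ₁] [SigmaFinite μ₂]
    {X : Ω → Ω₁} {Y : Ω → Ω₂} (hX : Measurable X) (hY : Measurable Y)
    (f : Ω₁ × Ω₂ → ℝ≥0∞) (hf : Measurable f)
    (hfdens : ∀ C : Set (Ω₁ × Ω₂), MeasurableSet C →
      ∫⁻ x in C, f x ∂(μ₁.prod μ₂) = P ((fun ω => (X ω, Y ω)) ⁻¹' C)) :
    (∀ A₂ : Set Ω₂, MeasurableSet A₂ →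
      Measurable (fun ω₁ => condProbOfDensity μ₂ f ω₁ A₂)) ∧
    (∀ (A₁ : Set Ω₁) (A₂ : Set Ω₂), MeasurableSet A₁ → MeasurableSet A₂ →
      ∫⁻ ω₁ in A₁, condProbOfDensity μ₂ f ω₁ A₂ ∂(P.map X) =
        P (X ⁻¹' A₁ ∩ Y ⁻¹' A₂)) := by

  set g : Ω₁ → ℝ≥0∞ := fun ω₁ => ∫⁻ ω₂, f (ω₁, ω₂) ∂μ₂ with hgdef
  have hgm : Measurable g := hf.lintegral_prod_right'
  have hsect : ∀ (A₂ : Set Ω₂), Measurable (fun ω₁ => ∫⁻ ω₂ in A₂, f (ω₁, ω₂) ∂μ₂) :=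
    fun A₂ => hf.lintegral_prod_right'
  have hK : ∀ (A₂ : Set Ω₂), MeasurableSet A₂ → ∀ ω₁,
      condProbOfDensity μ₂ f ω₁ A₂ =
        if 0 < g ω₁ ∧ g ω₁ < ⊤ then (g ω₁)⁻¹ * ∫⁻ ω₂ in A₂, f (ω₁, ω₂) ∂μ₂ else 0 := by
    intro A₂ hA₂ ω₁
    unfold condProbOfDensity
    split_ifs with h
    · simp [Measure.smul_apply, withDensity_apply _ hA₂, smul_eq_mul]; rfl
    · simp
  have hmeas : ∀ A₂ : Set Ω₂, MeasurableSet A₂ →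
      Measurable (fun ω₁ => condProbOfDensity μ₂ f ω₁ A₂) := by
    intro A₂ hA₂
    have : (fun ω₁ => condProbOfDensity μ₂ f ω₁ A₂) =
        fun ω₁ => if 0 < g ω₁ ∧ g ω₁ < ⊤ then (g ω₁)⁻¹ * ∫⁻ ω₂ in A₂, f (ω₁, ω₂) ∂μ₂ else 0 :=
      funext (hK A₂ hA₂)
    rw [this]
    have hset : MeasurableSet {ω₁ | 0 < g ω₁ ∧ g ω₁ < ⊤} := by
      have : {ω₁ | 0 < g ω₁ ∧ g ω₁ < ⊤} = g ⁻¹' Set.Ioo 0 ⊤ := rfl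
      rw [this]
      exact hgm measurableSet_Ioo
    exact Measurable.ite hset (hgm.inv.mul (hsect A₂)) measurable_const
  have hmap : P.map X = μ₁.withDensity g := by
    ext A₁ hA₁
    rw [Measure.map_apply hX hA₁, withDensity_apply _ hA₁]
    have h1 := hfdens (A₁ ×ˢ Set.univ) (hA₁.prod MeasurableSet.univ)
    have h2 : (fun ω => (X ω, Y ω)) ⁻¹' (A₁ ×ˢ Set.univ) = X ⁻¹' A₁ := by
      ext ω; simp
    rw [h2] at h1
    rw [← h1, ← Measure.prod_restrict, Measure.restrict_univ,
      lintegral_prod _ hf.aemeasurable]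
  refine ⟨hmeas, ?_⟩
  intro A₁ A₂ hA₁ hA₂
  have hgfin : ∀ᵐ ω₁ ∂μ₁, g ω₁ < ⊤ := by
    refine ae_lt_top hgm ?_
    have : ∫⁻ ω₁, g ω₁ ∂μ₁ = (P.map X) Set.univ := by
      rw [hmap, withDensity_apply _ MeasurableSet.univ, Measure.restrict_univ]
    rw [this, Measure.map_apply hX MeasurableSet.univ]
    simp
  calc ∫⁻ ω₁ in A₁, condProbOfDensity μ₂ f ω₁ A₂ ∂(P.map X)
      = ∫⁻ ω₁ in A₁, g ω₁ * condProbOfDensity μ₂ f ω₁ A₂ ∂μ₁ := by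
        rw [hmap, restrict_withDensity hA₁,
          lintegral_withDensity_eq_lintegral_mul _ hgm (hmeas A₂ hA₂)]
        rfl
    _ = ∫⁻ ω₁ in A₁, ∫⁻ ω₂ in A₂, f (ω₁, ω₂) ∂μ₂ ∂μ₁ := by
        refine lintegral_congr_ae (ae_restrict_of_ae ?_)
        filter_upwards [hgfin] with ω₁ hlt
        rw [hK A₂ hA₂ ω₁]
        split_ifs with h
        · rw [← mul_assoc, ENNReal.mul_inv_cancel h.1.ne' hlt.ne, one_mul]
        · have hg0 : g ω₁ = 0 := by
            by_contra h0
            exact h ⟨pos_iff_ne_zero.mpr h0, hlt⟩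
          have hle : ∫⁻ ω₂ in A₂, f (ω₁, ω₂) ∂μ₂ ≤ g ω₁ :=
            lintegral_mono' Measure.restrict_le_self le_rfl
          rw [hg0] at hle ⊢
          simp [le_antisymm hle zero_le]
    _ = ∫⁻ x in A₁ ×ˢ A₂, f x ∂(μ₁.prod μ₂) := by
        rw [← Measure.prod_restrict, lintegral_prod _ hf.aemeasurable]
    _ = P (X ⁻¹' A₁ ∩ Y ⁻¹' A₂) := by
        rw [hfdens (A₁ ×ˢ A₂) (hA₁.prod hA₂), Set.mk_preimage_prod]
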